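/- Let B be a Δ-regular N×N boolean matrix with N ≥ 2 and 1 ≤ Δ ≤ N. Then there exists a nonzero vector x ∈ ℝ^N whose coordinates sum to zero such that ‖Bx‖ ≥ √(Δ(N−Δ)/(N−1)) · ‖x‖. (Equivalently, the second largest singular value of B is at least √(Δ(N−Δ)/(N−1)).) -/

import Mathlib

/-- The Euclidean (ℓ²) norm of a vector in `ℝ^N`. -/
noncomputable def euclNorm {N : ℕ} (x : Fin N → ℝ) : ℝ :=
  Real.sqrt (∑ i, x i ^ 2)

/-- if `B` is a `Δ`-regular `N × N` boolean matrix with `N ≥ 2` and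
`1 ≤ Δ ≤ N`, then there is a nonzero vector `x` whose coordinates sum to zero with
`‖Bx‖ ≥ √(Δ(N-Δ)/(N-1)) ‖x‖`; i.e. the second largest singular value of `B` is at least
`√(Δ(N-Δ)/(N-1))`. -/
theorem second_singular_value_lower_bound
    (N Δ : ℕ) (hN : 2 ≤ N) (hΔ1 : 1 ≤ Δ) (hΔN : Δ ≤ N)
    (B : Matrix (Fin N) (Fin N) ℝ)
    (hbool : ∀ i j, B i j = 0 ∨ B i j = 1)
    (hrow : ∀ i, ∑ j, B i j = (Δ : ℝ)) (hcol : ∀ j, ∑ i, B i j = (Δ : ℝ)) :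
    ∃ x : Fin N → ℝ, x ≠ 0 ∧ ∑ i, x i = 0 ∧
      Real.sqrt ((Δ : ℝ) * ((N : ℝ) - (Δ : ℝ)) / ((N : ℝ) - 1)) * euclNorm x
        ≤ euclNorm (B.mulVec x) := by
  haveI : Nonempty (Fin N) := Fin.pos_iff_nonempty.mp (by omega)
  set n : ℝ := (N : ℝ) with hn
  set d : ℝ := (Δ : ℝ) with hd
  have hn2 : (2:ℝ) ≤ n := by rw [hn]; exact_mod_cast hN
  have hd1 : (1:ℝ) ≤ d := by rw [hd]; exact_mod_cast hΔ1
  have hdn : d ≤ n := by rw [hd, hn]; exact_mod_cast hΔN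
  have hn1 : (0:ℝ) < n - 1 := by linarith
  have key : ∀ i k, (n * B i k - d)^2 = (n^2 - 2*n*d) * B i k + d^2 := by
    intro i k; rcases hbool i k with h | h <;> rw [h] <;> ring
  have htot : ∑ k, ∑ i, (n * B i k - d)^2 = ∑ _k : Fin N, (n * d * (n - d)) := by
    rw [Finset.sum_const, Finset.card_univ, Fintype.card_fin, nsmul_eq_mul, ← hn]
    calc ∑ k, ∑ i, (n * B i k - d)^2
        = ∑ k : Fin N, ((n^2 - 2*n*d) * d + n * d^2) := by
          refine Finset.sum_congr rfl fun k _ => ?_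
          rw [show ∑ i, (n * B i k - d)^2 = ∑ i, ((n^2 - 2*n*d) * B i k + d^2) from
            Finset.sum_congr rfl fun i _ => key i k]
          rw [Finset.sum_add_distrib, ← Finset.mul_sum, hcol k, Finset.sum_const,
            Finset.card_univ, Fintype.card_fin, nsmul_eq_mul, ← hn]
      _ = n * ((n^2 - 2*n*d) * d + n * d^2) := by
          rw [Finset.sum_const, Finset.card_univ, Fintype.card_fin, nsmul_eq_mul, ← hn]
      _ = n * (n * d * (n - d)) := by ring
  obtain ⟨j, -, hj⟩ := Finset.exists_le_of_sum_le (Finset.univ_nonempty) htot.ge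
  set x : Fin N → ℝ := fun k => n * (if k = j then 1 else 0) - 1 with hx
  have hxj : x j = n - 1 := by simp [hx]
  have hmv : ∀ i, B.mulVec x i = n * B i j - d := by
    intro i
    have : ∀ k, B i k * x k = n * (if k = j then B i k else 0) - B i k := by
      intro k
      by_cases h : k = j <;> simp [hx, h] <;> ring
    simp only [Matrix.mulVec, dotProduct, this, Finset.sum_sub_distrib,
      ← Finset.mul_sum, Finset.sum_ite_eq', Finset.mem_univ, if_true, hrow i]
  refine ⟨x, ?_, ?_, ?_⟩
  · intro h
    have := congrFun h j
    rw [hxj] at this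
    simp at this
    linarith
  · have : ∀ k, x k = n * (if k = j then 1 else 0) - 1 := fun k => rfl
    simp only [this, Finset.sum_sub_distrib, ← Finset.mul_sum, Finset.sum_ite_eq',
      Finset.mem_univ, if_true, Finset.sum_const, Finset.card_univ, Fintype.card_fin,
      nsmul_eq_mul, mul_one, ← hn]
    ring
  · have hsumx : ∑ i, x i ^ 2 = n^2 - n := by
      have : ∀ i, x i ^ 2 = (n^2 - 2*n) * (if i = j then 1 else 0) + 1 := by
        intro i; by_cases h : i = j <;> simp [hx, h] <;> ring
      simp only [this, Finset.sum_add_distrib, ← Finset.mul_sum, Finset.sum_ite_eq',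
        Finset.mem_univ, if_true, Finset.sum_const, Finset.card_univ, Fintype.card_fin,
        nsmul_eq_mul, mul_one, ← hn]
      ring
    have hsumB : ∑ i, (B.mulVec x) i ^ 2 = ∑ i, (n * B i j - d)^2 :=
      Finset.sum_congr rfl fun i _ => by rw [hmv i]
    have ha : (0:ℝ) ≤ d * (n - d) / (n - 1) := div_nonneg (mul_nonneg (by linarith) (by linarith)) (by linarith)
    unfold euclNorm
    rw [hsumx, hsumB, ← Real.sqrt_mul ha]
    apply Real.sqrt_le_sqrt
    have heq : d * (n - d) / (n - 1) * (n^2 - n) = n * d * (n - d) := by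
      field_simp
    rw [heq]
    exact hj
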